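/- Let 1 < p < ∞, let w : ℤ → (0,∞) be a symmetric weight (w_{−k} = w_k for all k), let c : ℤ → ℂ have finite multiplier norm N_{p,w}(c) on ℓ^p(ℤ,w), and let n ∈ ℤ₊. Define the n-th Fejér truncation σ_n c : ℤ → ℂ by (σ_n c)(k) := (1 − |k|/(n+1)) c(k) for |k| ≤ n and (σ_n c)(k) := 0 for |k| > n. Then N_{p,w}(σ_n c) ≤ N_{p,w}(c). -/

import Mathlib

open scoped ENNReal

/-- The norm of `φ` in the weighted space `ℓ^r(ℤ,u)` (with value in `[0,∞]`). -/
noncomputable def wNorm (r : ℝ) (u : ℤ → ℝ) (φ : ℤ → ℂ) : ℝ≥0∞ :=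
  (∑' k : ℤ, ENNReal.ofReal (‖φ k‖ * u k) ^ r) ^ (1 / r)

/-- Convolution of a sequence `c : ℤ → ℂ` with a finitely supported `φ`. -/
noncomputable def conv (c : ℤ → ℂ) (φ : ℤ →₀ ℂ) : ℤ → ℂ :=
  fun j => ∑ k ∈ φ.support, c (j - k) * φ k

/-- The multiplier norm `N_{r,u}(c)` of a sequence `c : ℤ → ℂ` on `ℓ^r(ℤ,u)`. -/
noncomputable def multNorm (r : ℝ) (u : ℤ → ℝ) (c : ℤ → ℂ) : ℝ≥0∞ :=
  ⨆ φ : {φ : ℤ →₀ ℂ // φ ≠ 0}, wNorm r u (conv c φ.1) / wNorm r u (φ.1 : ℤ → ℂ)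

/-- The `n`-th Fejér truncation of a sequence `c : ℤ → ℂ`:
`(σ_n c)(k) = (1 − |k|/(n+1)) c(k)` for `|k| ≤ n` and `0` otherwise. -/
noncomputable def fejerTrunc (n : ℕ) (c : ℤ → ℂ) : ℤ → ℂ :=
  fun k => if |k| ≤ (n : ℤ) then (1 - ((|k| : ℤ) : ℂ) / ((n : ℂ) + 1)) * c k else 0


open Complex MeasureTheory


noncomputable def theta (M : ℕ) (j : ℕ) : ℝ := 2 * Real.pi * j / M

lemma sum_exp_eq (M : ℕ) (hM : 0 < M) (q : ℤ) :
    ∑ j ∈ Finset.range M, Complex.exp ((q:ℂ) * ((theta M j : ℝ):ℂ) * Complex.I)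
      = if (M:ℤ) ∣ q then (M : ℂ) else 0 := by
  have hMC : (M:ℂ) ≠ 0 := Nat.cast_ne_zero.mpr hM.ne'
  have hexp : ∀ j : ℕ, Complex.exp ((q:ℂ) * ((theta M j : ℝ):ℂ) * Complex.I)
      = Complex.exp ((q:ℂ) * ((2 * Real.pi / M : ℝ):ℂ) * Complex.I) ^ j := by
    intro j
    rw [← Complex.exp_nat_mul]
    congr 1
    simp only [theta]
    push_cast
    field_simp
  simp_rw [hexp]
  set z := Complex.exp ((q:ℂ) * ((2 * Real.pi / M : ℝ):ℂ) * Complex.I) with hz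
  have hzM : z ^ M = 1 := by
    rw [← Complex.exp_nat_mul]
    have h : (M:ℂ) * ((q:ℂ) * ((2 * Real.pi / M : ℝ):ℂ) * Complex.I)
        = (q:ℂ) * (2 * (Real.pi:ℂ) * Complex.I) := by
      push_cast
      field_simp
    rw [h]
    exact_mod_cast Complex.exp_int_mul_two_pi_mul_I q
  have hz1 : z = 1 ↔ (M:ℤ) ∣ q := by
    rw [hz, Complex.exp_eq_one_iff]
    constructor
    · rintro ⟨k, hk⟩
      refine ⟨k, ?_⟩
      have hπ : (Real.pi : ℂ) ≠ 0 := by exact_mod_cast Real.pi_ne_zero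
      have hne : (2 * (Real.pi:ℂ) * Complex.I) ≠ 0 := by
        simp [hπ, Complex.I_ne_zero]
      have h2 : (q:ℂ) * (2 * (Real.pi:ℂ) * Complex.I) = ((M:ℂ) * k) * (2 * (Real.pi:ℂ) * Complex.I) := by
        push_cast at hk
        field_simp at hk
        linear_combination (2 * (Real.pi:ℂ) * Complex.I) * hk
      have : (q:ℂ) = (M:ℂ) * k := mul_right_cancel₀ hne h2
      exact_mod_cast this
    · rintro ⟨k, rfl⟩
      refine ⟨k, ?_⟩
      push_cast
      field_simp
  by_cases h : (M:ℤ) ∣ q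
  · rw [if_pos h, hz1.mpr h]
    simp
  · rw [if_neg h, geom_sum_eq (fun h1 => h (hz1.mp h1)) M, hzM, sub_self, zero_div]

lemma count_pairs (n : ℕ) (m : ℤ) :
    ∑ k ∈ Finset.Icc (0:ℤ) (n:ℤ), ∑ l ∈ Finset.Icc (0:ℤ) (n:ℤ),
        (if k - l + m = 0 then (1:ℂ) else 0)
      = if |m| ≤ (n:ℤ) then ((n:ℂ) + 1 - ((|m|:ℤ) : ℂ)) else 0 := by
  have h1 : ∀ k : ℤ, ∑ l ∈ Finset.Icc (0:ℤ) (n:ℤ), (if k - l + m = 0 then (1:ℂ) else 0)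
      = if k + m ∈ Finset.Icc (0:ℤ) (n:ℤ) then (1:ℂ) else 0 := by
    intro k
    rw [← Finset.sum_ite_eq' (Finset.Icc (0:ℤ) (n:ℤ)) (k+m) (fun _ => (1:ℂ))]
    refine Finset.sum_congr rfl fun l _ => ?_
    congr 1
    exact propext ⟨fun h => by omega, fun h => by omega⟩
  simp_rw [h1]
  rw [Finset.sum_boole]
  have hfil : (Finset.Icc (0:ℤ) (n:ℤ)).filter (fun k => k + m ∈ Finset.Icc (0:ℤ) (n:ℤ))
      = Finset.Icc (max 0 (-m)) (min (n:ℤ) ((n:ℤ) - m)) := by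
    ext x
    simp only [Finset.mem_filter, Finset.mem_Icc]
    omega
  rw [hfil, Int.card_Icc]
  have hcast : ∀ x : ℤ, ((x.toNat : ℂ)) = ((x.toNat : ℤ) : ℂ) := by intro x; push_cast; ring
  rw [hcast]
  split_ifs with h
  · have : ((min (n:ℤ) ((n:ℤ)-m) + 1 - max 0 (-m)).toNat : ℤ) = (n:ℤ)+1-(m.natAbs:ℤ) := by
      rw [Int.abs_eq_natAbs] at h; omega
    rw [this, Int.abs_eq_natAbs]
    push_cast
    ring
  · have : ((min (n:ℤ) ((n:ℤ)-m) + 1 - max 0 (-m)).toNat : ℤ) = 0 := by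
      rw [Int.abs_eq_natAbs] at h; omega
    rw [this]
    push_cast
    ring

noncomputable def Dsum (n M : ℕ) (j : ℕ) : ℂ :=
  ∑ k ∈ Finset.Icc (0:ℤ) (n:ℤ), Complex.exp ((k:ℂ) * ((theta M j : ℝ):ℂ) * Complex.I)

noncomputable def acoef (n M : ℕ) (j : ℕ) : ℝ :=
  ‖Dsum n M j‖ ^ 2 / (M * (n+1))

lemma acoef_nonneg (n M : ℕ) (j : ℕ) : 0 ≤ acoef n M j := by
  unfold acoef; positivity

lemma hprod (k l m : ℤ) (t : ℝ) :
    Complex.exp ((k:ℂ) * (t:ℂ) * Complex.I) *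
      (starRingEnd ℂ) (Complex.exp ((l:ℂ) * (t:ℂ) * Complex.I)) *
      Complex.exp ((m:ℂ) * (t:ℂ) * Complex.I)
    = Complex.exp (((k - l + m : ℤ):ℂ) * (t:ℂ) * Complex.I) := by
  rw [← Complex.exp_conj, ← Complex.exp_add, ← Complex.exp_add]
  congr 1
  simp only [map_mul, Complex.conj_I, map_intCast, Complex.conj_ofReal]
  push_cast
  ring

lemma coeff_identity (n M : ℕ) (hM : 0 < M) (m : ℤ) (hm : m.natAbs + n < M) :
    ∑ j ∈ Finset.range M, ((acoef n M j : ℝ):ℂ) * Complex.exp ((m:ℂ) * ((theta M j : ℝ):ℂ) * Complex.I)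
      = if |m| ≤ (n:ℤ) then (1 - ((|m|:ℤ):ℂ) / ((n:ℂ) + 1)) else 0 := by
  have hMC : (M:ℂ) ≠ 0 := Nat.cast_ne_zero.mpr hM.ne'
  have hnC : ((n:ℂ) + 1) ≠ 0 := by
    have : ((n:ℂ) + 1) = ((n+1 : ℕ) : ℂ) := by push_cast; ring
    rw [this]; exact Nat.cast_ne_zero.mpr (Nat.succ_ne_zero n)
  have hD : ∀ j, ((acoef n M j : ℝ) : ℂ)
      = Dsum n M j * (starRingEnd ℂ) (Dsum n M j) / ((M:ℂ) * ((n:ℂ)+1)) := by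
    intro j
    rw [Complex.mul_conj, ← Complex.sq_norm]
    unfold acoef
    push_cast
    ring
  have step1 : ∀ j, ((acoef n M j : ℝ):ℂ) * Complex.exp ((m:ℂ) * ((theta M j : ℝ):ℂ) * Complex.I)
      = (∑ k ∈ Finset.Icc (0:ℤ) (n:ℤ), ∑ l ∈ Finset.Icc (0:ℤ) (n:ℤ),
          Complex.exp (((k - l + m : ℤ):ℂ) * ((theta M j : ℝ):ℂ) * Complex.I)) / ((M:ℂ) * ((n:ℂ)+1)) := by
    intro j
    rw [hD j, div_mul_eq_mul_div]
    congr 1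
    rw [Dsum, map_sum, Finset.sum_mul_sum, Finset.sum_mul]
    refine Finset.sum_congr rfl fun k _ => ?_
    rw [Finset.sum_mul]
    exact Finset.sum_congr rfl fun l _ => hprod k l m (theta M j)
  simp_rw [step1]
  rw [← Finset.sum_div]
  rw [Finset.sum_comm]
  have step2 : ∀ k ∈ Finset.Icc (0:ℤ) (n:ℤ),
      (∑ j ∈ Finset.range M, ∑ l ∈ Finset.Icc (0:ℤ) (n:ℤ),
          Complex.exp (((k - l + m : ℤ):ℂ) * ((theta M j : ℝ):ℂ) * Complex.I))
      = ∑ l ∈ Finset.Icc (0:ℤ) (n:ℤ), (M:ℂ) * (if k - l + m = 0 then (1:ℂ) else 0) := by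
    intro k hk
    rw [Finset.sum_comm]
    refine Finset.sum_congr rfl fun l hl => ?_
    rw [sum_exp_eq M hM (k - l + m)]
    simp only [Finset.mem_Icc] at hk hl
    have hiff : ((M:ℤ) ∣ (k - l + m)) ↔ (k - l + m = 0) := by
      constructor
      · intro hd
        refine Int.eq_zero_of_dvd_of_natAbs_lt_natAbs hd ?_
        omega
      · intro h; rw [h]; exact dvd_zero _
    rw [if_congr hiff rfl rfl]
    split_ifs <;> ring
  rw [Finset.sum_congr rfl step2]
  simp_rw [← Finset.mul_sum]
  rw [count_pairs n m]
  split_ifs with h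
  · field_simp
  · simp


variable {p : ℝ} {w : ℤ → ℝ}

lemma wNorm_congr_norm {f g : ℤ → ℂ} (h : ∀ k, ‖f k‖ = ‖g k‖) :
    wNorm p w f = wNorm p w g := by
  unfold wNorm
  congr 1
  exact tsum_congr fun k => by rw [h k]

lemma wNorm_mono (hp : 0 < p) (hw : ∀ k, 0 ≤ w k) {f g : ℤ → ℂ}
    (h : ∀ k, ‖f k‖ ≤ ‖g k‖) : wNorm p w f ≤ wNorm p w g := by
  unfold wNorm
  refine ENNReal.rpow_le_rpow (ENNReal.tsum_le_tsum fun k => ?_) (by positivity)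
  exact ENNReal.rpow_le_rpow (ENNReal.ofReal_le_ofReal
    (mul_le_mul_of_nonneg_right (h k) (hw k))) hp.le

lemma wNorm_zero (hp : 0 < p) : wNorm p w (fun _ => 0) = 0 := by
  unfold wNorm
  simp only [norm_zero, zero_mul, ENNReal.ofReal_zero, ENNReal.zero_rpow_of_pos hp,
    tsum_zero, ENNReal.zero_rpow_of_pos (by positivity : 0 < 1/p)]

lemma wNorm_add_le (hp1 : 1 ≤ p) (hw : ∀ k, 0 ≤ w k) (f g : ℤ → ℂ) :
    wNorm p w (fun k => f k + g k) ≤ wNorm p w f + wNorm p w g := by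
  have hp : 0 < p := lt_of_lt_of_le zero_lt_one hp1
  unfold wNorm
  have hcount : ∀ h : ℤ → ℂ, ∑' k : ℤ, ENNReal.ofReal (‖h k‖ * w k) ^ p
      = ∫⁻ k, (fun k => ENNReal.ofReal (‖h k‖ * w k)) k ^ p ∂Measure.count := by
    intro h; rw [lintegral_count]
  rw [hcount, hcount, hcount]
  calc (∫⁻ k, (fun k => ENNReal.ofReal (‖f k + g k‖ * w k)) k ^ p ∂Measure.count) ^ (1/p)
      ≤ (∫⁻ k, ((fun k => ENNReal.ofReal (‖f k‖ * w k)) + (fun k => ENNReal.ofReal (‖g k‖ * w k))) k ^ p ∂Measure.count) ^ (1/p) := by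
        refine ENNReal.rpow_le_rpow (lintegral_mono fun k => ?_) (by positivity)
        refine ENNReal.rpow_le_rpow ?_ hp.le
        simp only [Pi.add_apply]
        rw [← ENNReal.ofReal_add (mul_nonneg (norm_nonneg _) (hw k)) (mul_nonneg (norm_nonneg _) (hw k))]
        refine ENNReal.ofReal_le_ofReal ?_
        rw [← add_mul]
        exact mul_le_mul_of_nonneg_right (norm_add_le _ _) (hw k)
    _ ≤ _ := ENNReal.lintegral_Lp_add_le
        (measurable_of_countable _).aemeasurable (measurable_of_countable _).aemeasurable hp1

lemma wNorm_smul (hp : 0 < p) (b : ℝ) (hb : 0 ≤ b) (f : ℤ → ℂ) :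
    wNorm p w (fun k => (b:ℂ) * f k) = ENNReal.ofReal b * wNorm p w f := by
  unfold wNorm
  have h : ∀ k, ENNReal.ofReal (‖(b:ℂ) * f k‖ * w k) ^ p
      = ENNReal.ofReal b ^ p * ENNReal.ofReal (‖f k‖ * w k) ^ p := by
    intro k
    rw [norm_mul, Complex.norm_real, Real.norm_eq_abs, _root_.abs_of_nonneg hb, mul_assoc,
      ENNReal.ofReal_mul hb, ENNReal.mul_rpow_of_nonneg _ _ hp.le]
  simp_rw [h]
  rw [ENNReal.tsum_mul_left, ENNReal.mul_rpow_of_nonneg _ _ (by positivity : (0:ℝ) ≤ 1/p),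
    ← ENNReal.rpow_mul, mul_one_div_cancel hp.ne', ENNReal.rpow_one]

lemma wNorm_weighted_sum_le (hp1 : 1 ≤ p) (hw : ∀ k, 0 ≤ w k) {ι : Type*} (s : Finset ι)
    (b : ι → ℝ) (hb : ∀ i ∈ s, 0 ≤ b i) (f : ι → ℤ → ℂ) :
    wNorm p w (fun k => ∑ i ∈ s, (b i : ℂ) * f i k)
      ≤ ∑ i ∈ s, ENNReal.ofReal (b i) * wNorm p w (f i) := by
  have hp : 0 < p := lt_of_lt_of_le zero_lt_one hp1
  induction s using Finset.cons_induction with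
  | empty => simp [wNorm_zero hp]
  | cons i s his ih =>
    simp only [Finset.sum_cons]
    calc wNorm p w (fun k => (b i : ℂ) * f i k + ∑ i' ∈ s, (b i' : ℂ) * f i' k)
        ≤ wNorm p w (fun k => (b i : ℂ) * f i k) + wNorm p w (fun k => ∑ i' ∈ s, (b i' : ℂ) * f i' k) :=
          wNorm_add_le hp1 hw _ _
      _ ≤ ENNReal.ofReal (b i) * wNorm p w (f i) + ∑ i' ∈ s, ENNReal.ofReal (b i') * wNorm p w (f i') := by
          rw [wNorm_smul hp (b i) (hb i (Finset.mem_cons_self i s)) (f i)]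
          exact add_le_add le_rfl (ih fun i' hi' => hb i' (Finset.mem_cons_of_mem hi'))

lemma wNorm_finsupp_ne_top (hp : 0 < p) (ψ : ℤ →₀ ℂ) : wNorm p w (ψ : ℤ → ℂ) ≠ ⊤ := by
  unfold wNorm
  have hz : ∀ k ∉ ψ.support, ENNReal.ofReal (‖(ψ : ℤ → ℂ) k‖ * w k) ^ p = 0 := by
    intro k hk
    rw [Finsupp.notMem_support_iff] at hk
    simp [hk, ENNReal.zero_rpow_of_pos hp]
  rw [tsum_eq_sum hz]
  refine ENNReal.rpow_ne_top_of_nonneg (by positivity) ?_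
  refine (ENNReal.sum_lt_top.mpr fun k _ => ?_).ne
  exact ENNReal.rpow_lt_top_of_nonneg hp.le ENNReal.ofReal_ne_top

lemma wNorm_finsupp_ne_zero (hp : 0 < p) (hw : ∀ k, 0 < w k) {ψ : ℤ →₀ ℂ} (hψ : ψ ≠ 0) :
    wNorm p w (ψ : ℤ → ℂ) ≠ 0 := by
  obtain ⟨k, hk⟩ : ∃ k, ψ k ≠ 0 := by
    by_contra h
    push_neg at h
    exact hψ (Finsupp.ext h)
  unfold wNorm
  have hpos : 0 < ENNReal.ofReal (‖(ψ : ℤ → ℂ) k‖ * w k) ^ p := by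
    refine ENNReal.rpow_pos (ENNReal.ofReal_pos.mpr ?_) ENNReal.ofReal_ne_top
    have : 0 < ‖ψ k‖ := norm_pos_iff.mpr hk
    exact mul_pos this (hw k)
  have hsum : 0 < ∑' k : ℤ, ENNReal.ofReal (‖(ψ : ℤ → ℂ) k‖ * w k) ^ p :=
    lt_of_lt_of_le hpos (ENNReal.le_tsum k)
  intro hcon
  rcases ENNReal.rpow_eq_zero_iff.mp hcon with ⟨h1, _⟩ | ⟨_, h2⟩
  · exact hsum.ne' h1
  · exact (by positivity : (0:ℝ) < 1/p).not_gt h2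




noncomputable def modSeq (t : ℝ) (c : ℤ → ℂ) : ℤ → ℂ :=
  fun m => Complex.exp ((m:ℂ) * (t:ℂ) * Complex.I) * c m

noncomputable def modF (t : ℝ) (φ : ℤ →₀ ℂ) : ℤ →₀ ℂ :=
  ⟨φ.support, fun k => Complex.exp ((k:ℂ) * (t:ℂ) * Complex.I) * φ k, by
    intro a
    simp [Finsupp.mem_support_iff, Complex.exp_ne_zero]⟩

lemma modF_apply (t : ℝ) (φ : ℤ →₀ ℂ) (k : ℤ) :
    (modF t φ) k = Complex.exp ((k:ℂ) * (t:ℂ) * Complex.I) * φ k := rfl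

lemma modF_support (t : ℝ) (φ : ℤ →₀ ℂ) : (modF t φ).support = φ.support := rfl

lemma norm_exp_int_mul (k : ℤ) (t : ℝ) : ‖Complex.exp ((k:ℂ) * (t:ℂ) * Complex.I)‖ = 1 := by
  rw [show ((k:ℂ) * (t:ℂ)) = (((k * t : ℝ)):ℂ) by push_cast; ring]
  exact Complex.norm_exp_ofReal_mul_I _

lemma modF_ne_zero (t : ℝ) {φ : ℤ →₀ ℂ} (hφ : φ ≠ 0) : modF t φ ≠ 0 := by
  intro h
  apply hφ
  ext k
  have h2 : (modF t φ) k = 0 := by rw [h]; rfl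
  rw [modF_apply] at h2
  simpa [Complex.exp_ne_zero] using h2

variable {p : ℝ} {w : ℤ → ℝ}

lemma wNorm_modF (t : ℝ) (φ : ℤ →₀ ℂ) :
    wNorm p w ((modF t φ) : ℤ → ℂ) = wNorm p w (φ : ℤ → ℂ) :=
  wNorm_congr_norm fun k => by rw [modF_apply, norm_mul, norm_exp_int_mul, one_mul]

lemma conv_modSeq (t : ℝ) (c : ℤ → ℂ) (φ : ℤ →₀ ℂ) (j : ℤ) :
    conv (modSeq t c) φ j
      = Complex.exp ((j:ℂ) * (t:ℂ) * Complex.I) * conv c (modF (-t) φ) j := by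
  unfold conv modSeq
  rw [Finset.mul_sum]
  rw [modF_support]
  refine Finset.sum_congr rfl fun k _ => ?_
  rw [modF_apply]
  have hexp : Complex.exp (((j - k : ℤ):ℂ) * (t:ℂ) * Complex.I)
      = Complex.exp ((j:ℂ) * (t:ℂ) * Complex.I)
        * Complex.exp ((k:ℂ) * ((-t : ℝ):ℂ) * Complex.I) := by
    rw [← Complex.exp_add]
    congr 1
    push_cast
    ring
  rw [hexp]
  ring

lemma wNorm_conv_mod (t : ℝ) (c : ℤ → ℂ) (φ : ℤ →₀ ℂ) :
    wNorm p w (conv (modSeq t c) φ) = wNorm p w (conv c (modF (-t) φ)) :=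
  wNorm_congr_norm fun j => by rw [conv_modSeq, norm_mul, norm_exp_int_mul, one_mul]

lemma conv_le_multNorm (hp : 0 < p) (hw : ∀ k, 0 < w k) (c : ℤ → ℂ) {ψ : ℤ →₀ ℂ}
    (hψ : ψ ≠ 0) :
    wNorm p w (conv c ψ) ≤ multNorm p w c * wNorm p w (ψ : ℤ → ℂ) := by
  have h0 := wNorm_finsupp_ne_zero hp hw hψ (p := p) (w := w)
  have hT := wNorm_finsupp_ne_top hp ψ (w := w)
  have hle : wNorm p w (conv c ψ) / wNorm p w (ψ : ℤ → ℂ) ≤ multNorm p w c :=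
    le_iSup (fun φ : {φ : ℤ →₀ ℂ // φ ≠ 0} =>
      wNorm p w (conv c φ.1) / wNorm p w (φ.1 : ℤ → ℂ)) ⟨ψ, hψ⟩
  calc wNorm p w (conv c ψ)
      = wNorm p w (conv c ψ) / wNorm p w (ψ : ℤ → ℂ) * wNorm p w (ψ : ℤ → ℂ) :=
        (ENNReal.div_mul_cancel h0 hT).symm
    _ ≤ _ := mul_le_mul_left hle _

/-- **Uniform boundedness of Fejér means in the multiplier norm**: for a symmetric weight
`w` and a multiplier `c` on `ℓ^p(ℤ,w)`, `N_{p,w}(σ_n c) ≤ N_{p,w}(c)` for all `n`. -/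
theorem multNorm_fejerTrunc_le (p : ℝ) (hp : 1 < p) (w : ℤ → ℝ)
    (hw : ∀ k, 0 < w k) (hsym : ∀ k : ℤ, w (-k) = w k) (c : ℤ → ℂ)
    (hc : multNorm p w c ≠ ⊤) (n : ℕ) :
    multNorm p w (fejerTrunc n c) ≤ multNorm p w c := by
  have hp1 : 1 ≤ p := hp.le
  have hp0 : 0 < p := lt_trans zero_lt_one hp
  have hw0 : ∀ k, 0 ≤ w k := fun k => (hw k).le
  refine iSup_le ?_
  rintro ⟨φ, hφ⟩
  refine ENNReal.div_le_of_le_mul ?_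
  set R := φ.support.sup (fun k => k.natAbs) with hRdef
  have hRle : ∀ k ∈ φ.support, k.natAbs ≤ R := fun k hk =>
    Finset.le_sup (f := fun k : ℤ => k.natAbs) hk
  set M := 2*R + 2*n + 1 with hMdef
  have hM : 0 < M := by omega
  set ctil : ℤ → ℂ := fun m => ∑ j' ∈ Finset.range M,
      ((acoef n M j' : ℝ):ℂ) * Complex.exp ((m:ℂ) * ((theta M j' : ℝ):ℂ) * Complex.I) * c m
    with hctil
  have hfc : ∀ m : ℤ, m.natAbs + n < M → ctil m = fejerTrunc n c m := by
    intro m hm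
    rw [hctil]
    simp only
    rw [← Finset.sum_mul, coeff_identity n M hM m hm, fejerTrunc]
    split_ifs <;> simp
  have hpoint : ∀ j : ℤ, ‖conv (fejerTrunc n c) φ j‖ ≤ ‖conv ctil φ j‖ := by
    intro j
    by_cases hcase : ∀ k ∈ φ.support, (j - k).natAbs + n < M
    · have heq : conv (fejerTrunc n c) φ j = conv ctil φ j := by
        unfold conv
        exact Finset.sum_congr rfl fun k hk => by rw [← hfc (j-k) (hcase k hk)]
      rw [heq]
    · push_neg at hcase
      obtain ⟨k₀, hk₀mem, hk₀⟩ := hcase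
      have hz : conv (fejerTrunc n c) φ j = 0 := by
        unfold conv
        refine Finset.sum_eq_zero fun k hk => ?_
        have h1 := hRle k hk
        have h2 := hRle k₀ hk₀mem
        have h3 : ¬ (|j - k| ≤ (n:ℤ)) := by
          rw [Int.abs_eq_natAbs]
          omega
        rw [fejerTrunc, if_neg h3, zero_mul]
      rw [hz]
      simp
  have hstep1 : wNorm p w (conv (fejerTrunc n c) φ) ≤ wNorm p w (conv ctil φ) :=
    wNorm_mono hp0 hw0 hpoint
  have hC : conv ctil φ = fun j => ∑ j' ∈ Finset.range M,
      ((acoef n M j' : ℝ):ℂ) * conv (modSeq (theta M j') c) φ j := by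
    funext j
    unfold conv
    calc ∑ k ∈ φ.support, ctil (j-k) * φ k
        = ∑ k ∈ φ.support, ∑ j' ∈ Finset.range M,
            ((acoef n M j' : ℝ):ℂ) * Complex.exp (((j-k : ℤ):ℂ) * ((theta M j' : ℝ):ℂ) * Complex.I)
              * c (j-k) * φ k := by
          refine Finset.sum_congr rfl fun k hk => ?_
          rw [hctil]
          simp only
          rw [Finset.sum_mul]
      _ = ∑ j' ∈ Finset.range M, ∑ k ∈ φ.support,
            ((acoef n M j' : ℝ):ℂ) * Complex.exp (((j-k : ℤ):ℂ) * ((theta M j' : ℝ):ℂ) * Complex.I)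
              * c (j-k) * φ k := Finset.sum_comm
      _ = ∑ j' ∈ Finset.range M, ((acoef n M j' : ℝ):ℂ) * conv (modSeq (theta M j') c) φ j := by
          refine Finset.sum_congr rfl fun j' _ => ?_
          unfold conv modSeq
          rw [Finset.mul_sum]
          refine Finset.sum_congr rfl fun k _ => ?_
          push_cast
          ring
  have hstep2 : wNorm p w (conv ctil φ)
      ≤ ∑ j' ∈ Finset.range M, ENNReal.ofReal (acoef n M j')
          * wNorm p w (conv (modSeq (theta M j') c) φ) := by
    rw [hC]
    exact wNorm_weighted_sum_le hp1 hw0 _ _ (fun i _ => acoef_nonneg n M i) _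
  have hmod : ∀ j' : ℕ, wNorm p w (conv (modSeq (theta M j') c) φ)
      ≤ multNorm p w c * wNorm p w (φ : ℤ → ℂ) := by
    intro j'
    rw [wNorm_conv_mod]
    have hb := conv_le_multNorm hp0 hw c (modF_ne_zero (-(theta M j')) hφ)
    rwa [wNorm_modF] at hb
  have hsum1 : ∑ j' ∈ Finset.range M, acoef n M j' = 1 := by
    have h0 := coeff_identity n M hM 0 (by omega)
    have h1 : ∑ j' ∈ Finset.range M, ((acoef n M j' : ℝ):ℂ) = 1 := by
      simpa using h0
    have h2 : ((∑ j' ∈ Finset.range M, acoef n M j' : ℝ) : ℂ) = ((1:ℝ):ℂ) := by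
      push_cast
      simpa using h1
    exact_mod_cast h2
  calc wNorm p w (conv (fejerTrunc n c) φ)
      ≤ wNorm p w (conv ctil φ) := hstep1
    _ ≤ _ := hstep2
    _ ≤ ∑ j' ∈ Finset.range M, ENNReal.ofReal (acoef n M j')
          * (multNorm p w c * wNorm p w (φ : ℤ → ℂ)) :=
        Finset.sum_le_sum fun j' _ => mul_le_mul_right (hmod j') _
    _ = (∑ j' ∈ Finset.range M, ENNReal.ofReal (acoef n M j'))
          * (multNorm p w c * wNorm p w (φ : ℤ → ℂ)) := by rw [Finset.sum_mul]
    _ = 1 * (multNorm p w c * wNorm p w (φ : ℤ → ℂ)) := by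
        rw [← ENNReal.ofReal_sum_of_nonneg (fun i _ => acoef_nonneg n M i), hsum1,
          ENNReal.ofReal_one]
    _ = multNorm p w c * wNorm p w (φ : ℤ → ℂ) := one_mul _
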